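/- If there exists a compact h-set, i.e., a nonempty compact set Γ ⊂ ℝ^k and a finite Borel measure μ with support Γ such that c⁻¹ h(t) ≤ μ(B_t(x)) ≤ c h(t) for all x ∈ Γ and t ∈ (0,1] (balls in the sup-norm), then the function h satisfies the doubling condition: there exists b > 0 such that h(2t) ≤ b·h(t) for all 0 < t ≤ 1/2. -/

import Mathlib

open MeasureTheory Metric Set

lemma grid_aux {t u : ℝ} (ht : 0 < t) (hu0 : 0 ≤ u) (hu4 : u ≤ 4*t) :
    t * ((min 3 ⌊u/t⌋₊ : ℕ) : ℝ) ≤ u ∧ u ≤ t * (((min 3 ⌊u/t⌋₊ : ℕ) : ℝ) + 1) := by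
  have hut : 0 ≤ u / t := div_nonneg hu0 ht.le
  by_cases hle : ⌊u/t⌋₊ ≤ 3
  · rw [min_eq_right hle]
    constructor
    · have h1 : (⌊u/t⌋₊ : ℝ) ≤ u / t := Nat.floor_le hut
      calc t * (⌊u/t⌋₊ : ℝ) ≤ t * (u / t) := by nlinarith
        _ = u := by field_simp
    · have h2 : u / t < (⌊u/t⌋₊ : ℝ) + 1 := Nat.lt_floor_add_one _
      have : u < t * ((⌊u/t⌋₊ : ℝ) + 1) := by
        calc u = t * (u / t) := by field_simp
          _ < t * ((⌊u/t⌋₊ : ℝ) + 1) := by nlinarith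
      linarith
  · rw [min_eq_left (by omega)]
    have h4 : (4 : ℕ) ≤ ⌊u/t⌋₊ := by omega
    have : (4 : ℝ) ≤ u / t := by
      have := Nat.le_floor_iff hut |>.mp h4
      exact_mod_cast this
    have h4t : 4 * t ≤ u := by
      calc 4 * t ≤ (u / t) * t := by nlinarith
        _ = u := by field_simp
    constructor
    · push_cast; linarith
    · push_cast; linarith

theorem stmt0 (k : ℕ) (h : ℝ → ℝ)
    (hpos : ∀ t ∈ Set.Ioc (0:ℝ) 1, 0 < h t)
    (hmono : ∀ s t : ℝ, s ∈ Set.Ioc (0:ℝ) 1 → t ∈ Set.Ioc (0:ℝ) 1 → s ≤ t → h s ≤ h t)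
    (Γ : Set (Fin k → ℝ)) (hΓne : Γ.Nonempty) (hΓc : IsCompact Γ)
    (μ : Measure (Fin k → ℝ)) [IsFiniteMeasure μ]
    (hsupp : Γ = {x | ∀ ε > 0, 0 < μ (Metric.ball x ε)})
    (c : ℝ) (hc : 1 ≤ c)
    (hbound : ∀ x ∈ Γ, ∀ t ∈ Set.Ioc (0:ℝ) 1,
      c⁻¹ * h t ≤ (μ (Metric.closedBall x t)).toReal ∧
      (μ (Metric.closedBall x t)).toReal ≤ c * h t) :
    ∃ b > 0, ∀ t : ℝ, 0 < t → t ≤ 1/2 → h (2*t) ≤ b * h t := by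
  obtain ⟨x₀, hx₀⟩ := hΓne
  have hc0 : (0:ℝ) < c := lt_of_lt_of_le one_pos hc
  -- the measure vanishes outside Γ
  have hΓnull : μ Γᶜ = 0 := by
    apply measure_null_of_locally_null
    intro x hx
    rw [hsupp] at hx
    simp only [mem_compl_iff, mem_setOf_eq, not_forall] at hx
    push_neg at hx
    obtain ⟨ε, hε, hμ⟩ := hx
    exact ⟨ball x ε, mem_nhdsWithin_of_mem_nhds (ball_mem_nhds x hε),
      le_antisymm hμ zero_le⟩
  refine ⟨4^k * c^2, by positivity, ?_⟩
  intro t ht ht2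
  have h2t : 2*t ∈ Set.Ioc (0:ℝ) 1 := ⟨by linarith, by linarith⟩
  have htIoc : t ∈ Set.Ioc (0:ℝ) 1 := ⟨ht, by linarith⟩
  -- grid centers
  set p : (Fin k → Fin 4) → (Fin k → ℝ) :=
    fun z i => x₀ i - 2*t + t * ((z i : ℕ) : ℝ) + t/2 with hp
  -- covering
  have hcover : Γ ∩ closedBall x₀ (2*t) ⊆
      ⋃ z : Fin k → Fin 4, Γ ∩ closedBall (p z) (t/2) := by
    rintro y ⟨hyΓ, hy⟩
    have hyd : ∀ i, |y i - x₀ i| ≤ 2*t := by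
      intro i
      have h1 : dist (y i) (x₀ i) ≤ dist y x₀ := dist_le_pi_dist y x₀ i
      rw [Real.dist_eq] at h1
      exact h1.trans (mem_closedBall.mp hy)
    refine mem_iUnion.mpr ⟨fun i => ⟨min 3 ⌊(y i - x₀ i + 2*t)/t⌋₊, by omega⟩, hyΓ, ?_⟩
    rw [mem_closedBall]
    apply (dist_pi_le_iff (by linarith)).mpr
    intro i
    rw [Real.dist_eq]
    have habs := hyd i
    have hu0 : (0:ℝ) ≤ y i - x₀ i + 2*t := by
      have := abs_le.mp habs; linarith [this.1]
    have hu4 : y i - x₀ i + 2*t ≤ 4*t := by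
      have := abs_le.mp habs; linarith [this.2]
    obtain ⟨hl, hr⟩ := grid_aux ht hu0 hu4
    rw [abs_le]
    simp only [hp]
    constructor <;> [skip; skip] <;>
      · push_cast at hl hr ⊢
        linarith
  -- each piece has small measure
  have key : ∀ z : Fin k → Fin 4,
      μ (Γ ∩ closedBall (p z) (t/2)) ≤ ENNReal.ofReal (c * h t) := by
    intro z
    by_cases hne : (Γ ∩ closedBall (p z) (t/2)).Nonempty
    · obtain ⟨w, hwΓ, hw⟩ := hne
      have hsub : Γ ∩ closedBall (p z) (t/2) ⊆ closedBall w t := by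
        rintro y ⟨-, hy⟩
        rw [mem_closedBall] at *
        calc dist y w ≤ dist y (p z) + dist (p z) w := dist_triangle _ _ _
          _ ≤ t/2 + t/2 := add_le_add hy (by rw [dist_comm]; exact hw)
          _ = t := by ring
      calc μ (Γ ∩ closedBall (p z) (t/2)) ≤ μ (closedBall w t) := measure_mono hsub
        _ = ENNReal.ofReal ((μ (closedBall w t)).toReal) :=
            (ENNReal.ofReal_toReal (measure_ne_top μ _)).symm
        _ ≤ ENNReal.ofReal (c * h t) :=
            ENNReal.ofReal_le_ofReal (hbound w hwΓ t htIoc).2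
    · rw [not_nonempty_iff_eq_empty] at hne
      simp [hne]
  -- total bound
  have hμle : μ (closedBall x₀ (2*t)) ≤ (4^k : ℕ) * ENNReal.ofReal (c * h t) := by
    have h1 : μ (closedBall x₀ (2*t)) ≤ μ (Γ ∩ closedBall x₀ (2*t)) := by
      calc μ (closedBall x₀ (2*t))
          ≤ μ (closedBall x₀ (2*t) ∩ Γ) + μ (closedBall x₀ (2*t) \ Γ) :=
            measure_le_inter_add_diff μ _ _
        _ ≤ μ (closedBall x₀ (2*t) ∩ Γ) + μ Γᶜ :=
            add_le_add_right (measure_mono (diff_subset_compl _ _)) _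
        _ = μ (Γ ∩ closedBall x₀ (2*t)) := by rw [hΓnull, add_zero, inter_comm]
    have h2 : μ (Γ ∩ closedBall x₀ (2*t)) ≤
        ∑' z : Fin k → Fin 4, μ (Γ ∩ closedBall (p z) (t/2)) :=
      (measure_mono hcover).trans (measure_iUnion_le _)
    have h3 : ∑' z : Fin k → Fin 4, μ (Γ ∩ closedBall (p z) (t/2)) ≤
        (4^k : ℕ) * ENNReal.ofReal (c * h t) := by
      rw [tsum_fintype]
      calc ∑ z : Fin k → Fin 4, μ (Γ ∩ closedBall (p z) (t/2))
          ≤ ∑ _z : Fin k → Fin 4, ENNReal.ofReal (c * h t) :=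
            Finset.sum_le_sum (fun z _ => key z)
        _ = (Fintype.card (Fin k → Fin 4) : ℕ) * ENNReal.ofReal (c * h t) := by
            rw [Finset.sum_const, Finset.card_univ, nsmul_eq_mul]
        _ = (4^k : ℕ) * ENNReal.ofReal (c * h t) := by
            rw [Fintype.card_fun, Fintype.card_fin, Fintype.card_fin]
    exact h1.trans (h2.trans h3)
  -- conclude in ℝ
  have hht : 0 ≤ c * h t := le_of_lt (mul_pos hc0 (hpos t htIoc))
  have hM : (μ (closedBall x₀ (2*t))).toReal ≤ (4:ℝ)^k * (c * h t) := by
    have := ENNReal.toReal_mono (by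
      refine ENNReal.mul_ne_top ?_ ENNReal.ofReal_ne_top
      simp) hμle
    rw [ENNReal.toReal_mul, ENNReal.toReal_ofReal hht] at this
    simpa using this
  have hlow := (hbound x₀ hx₀ (2*t) h2t).1
  have : h (2*t) ≤ c * ((4:ℝ)^k * (c * h t)) := by
    have : c⁻¹ * h (2*t) ≤ (4:ℝ)^k * (c * h t) := hlow.trans hM
    calc h (2*t) = c * (c⁻¹ * h (2*t)) := by field_simp
      _ ≤ c * ((4:ℝ)^k * (c * h t)) := by nlinarith
  linarith [this, show c * ((4:ℝ)^k * (c * h t)) = 4^k * c^2 * h t from by ring]
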